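/- Let (G, T) be a graft with a connected minimum join F, let r ∈ V(G) be a vertex covered by F, and let K₀ be the connected component containing r of the subgraph of G induced on {x ∈ V(G) : dist(r, x) ≤ 0}. Then every edge of F has both endpoints in V(K₀); consequently T ⊆ V(K₀), and |V(K₀)| > 1. -/

import Mathlib

open SimpleGraph
open scoped Classical

variable {V : Type*} [Fintype V] [DecidableEq V]

/-- `(G, T)` is a graft: every connected component of `G` contains an even number
of vertices of `T`. -/
def IsGraft (G : SimpleGraph V) (T : Set V) : Prop :=
  ∀ v : V, Even {u ∈ T | G.Reachable v u}.ncard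

/-- `F` is a join of `(G, T)`: `F ⊆ E(G)` and every vertex `v` is incident to an odd
number of edges of `F` exactly when `v ∈ T`. -/
def IsJoin (G : SimpleGraph V) (T : Set V) (F : Set (Sym2 V)) : Prop :=
  F ⊆ G.edgeSet ∧ ∀ v : V, (Odd {e ∈ F | v ∈ e}.ncard ↔ v ∈ T)

/-- `F` is a minimum join of `(G, T)`. -/
def IsMinJoin (G : SimpleGraph V) (T : Set V) (F : Set (Sym2 V)) : Prop :=
  IsJoin G T F ∧ ∀ F' : Set (Sym2 V), IsJoin G T F' → F.ncard ≤ F'.ncard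

/-- `F`-weight of an edge: `-1` if the edge is in `F`, `+1` otherwise. -/
noncomputable def ew (F : Set (Sym2 V)) (e : Sym2 V) : ℤ :=
  if e ∈ F then -1 else 1

/-- `F`-weight of a walk: the sum of the `F`-weights of its edges. -/
noncomputable def walkWeight {G : SimpleGraph V} {x y : V} (F : Set (Sym2 V))
    (p : G.Walk x y) : ℤ :=
  (p.edges.map (ew F)).sum

/-- `F`-distance between `x` and `y`: the minimum `F`-weight of a path between them. -/
noncomputable def distF (G : SimpleGraph V) (F : Set (Sym2 V)) (x y : V) : ℤ :=
  sInf {w : ℤ | ∃ p : G.Walk x y, p.IsPath ∧ walkWeight F p = w}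

/-- `F` covers the vertex `v`. -/
def Covers (F : Set (Sym2 V)) (v : V) : Prop := ∃ e ∈ F, v ∈ e

/-- The edge set `F` is nonempty and determines a connected subgraph. -/
def ConnectedEdgeSet (F : Set (Sym2 V)) : Prop :=
  F.Nonempty ∧ ∀ x y : V, Covers F x → Covers F y →
    (SimpleGraph.fromEdgeSet F).Reachable x y

/-- `e` has exactly one endpoint in `K`. -/
def Crossing (K : Set V) (e : Sym2 V) : Prop :=
  ∃ x y : V, e = s(x, y) ∧ x ∈ K ∧ y ∉ K

/-- The subgraph of `G` induced on `S` (viewed as a graph on the same vertex type). -/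
def sgRestrict (G : SimpleGraph V) (S : Set V) : SimpleGraph V where
  Adj x y := G.Adj x y ∧ x ∈ S ∧ y ∈ S
  symm := ⟨fun x y h => ⟨h.1.symm, h.2.2, h.2.1⟩⟩
  loopless := ⟨fun x h => G.loopless.irrefl x h.1⟩

/-- The subgraph of `G` induced on `S`, with all edges having both endpoints in `L` deleted. -/
def sgRestrictDel (G : SimpleGraph V) (S L : Set V) : SimpleGraph V where
  Adj x y := G.Adj x y ∧ x ∈ S ∧ y ∈ S ∧ ¬(x ∈ L ∧ y ∈ L)
  symm := ⟨fun x y h => ⟨h.1.symm, h.2.2.1, h.2.1, fun hc => h.2.2.2 ⟨hc.2, hc.1⟩⟩⟩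
  loopless := ⟨fun x h => G.loopless.irrefl x h.1⟩

/-- `K` is (the vertex set of) a connected component of the subgraph of `G` induced on `S`. -/
def IsCompOn (G : SimpleGraph V) (S K : Set V) : Prop :=
  ∃ v ∈ S, K = {u | (sgRestrict G S).Reachable v u}


lemma walkWeight_bddBelow (G : SimpleGraph V) (F : Set (Sym2 V)) (x y : V) :
    BddBelow {w : ℤ | ∃ p : G.Walk x y, p.IsPath ∧ walkWeight F p = w} := by
  refine ⟨-(Fintype.card V : ℤ), ?_⟩
  rintro w ⟨p, hp, rfl⟩
  have h1 : -(p.length : ℤ) ≤ walkWeight F p := by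
    unfold walkWeight
    have : ∀ l : List (Sym2 V), -(l.length : ℤ) ≤ (l.map (ew F)).sum := by
      intro l
      induction l with
      | nil => simp
      | cons a t ih =>
        simp only [List.map_cons, List.sum_cons, List.length_cons]
        have : -1 ≤ ew F a := by unfold ew; split <;> omega
        push_cast; omega
    simpa [SimpleGraph.Walk.length_edges] using this p.edges
  have h2 : p.length ≤ Fintype.card V := by
    have := hp.length_lt
    omega
  have : -(Fintype.card V : ℤ) ≤ -(p.length : ℤ) := by
    exact_mod_cast neg_le_neg (by exact_mod_cast h2)
  omega

lemma distF_nonpos_of_reachable_in_F (G : SimpleGraph V) (F : Set (Sym2 V))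
    (hFE : F ⊆ G.edgeSet) (r v : V)
    (h : (SimpleGraph.fromEdgeSet F).Reachable r v) : distF G F r v ≤ 0 := by
  obtain ⟨w⟩ := h
  let p := w.toPath
  have hle : SimpleGraph.fromEdgeSet F ≤ G := by
    intro a b hab
    rw [SimpleGraph.fromEdgeSet_adj] at hab
    exact (G.mem_edgeSet).1 (hFE hab.1)
  have hedges : (p.1.mapLe hle).edges = p.1.edges := by
    simp only [SimpleGraph.Walk.mapLe, SimpleGraph.Walk.edges_map]
    have hid : ⇑(SimpleGraph.Hom.ofLE hle) = id := rfl
    simp [hid, Sym2.map_id]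
  have hweight : walkWeight F (p.1.mapLe hle) ≤ 0 := by
    unfold walkWeight
    rw [hedges]
    have : ∀ e ∈ p.1.edges, ew F e = -1 := by
      intro e he
      have := p.1.edges_subset_edgeSet he
      rw [SimpleGraph.edgeSet_fromEdgeSet] at this
      unfold ew
      simp [this.1]
    calc (p.1.edges.map (ew F)).sum ≤ (p.1.edges.map (fun _ => (0:ℤ))).sum := by
          apply List.sum_le_sum
          intro i hi
          rw [this i hi]; norm_num
      _ = 0 := by simp
  refine le_trans (csInf_le (walkWeight_bddBelow G F r v) ?_) hweight
  exact ⟨p.1.mapLe hle, (SimpleGraph.Walk.mapLe_isPath hle).2 p.2, rfl⟩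

/-- let `(G, T)` be a graft with a connected minimum join `F` covering `r`,
and let `K₀` be the connected component of `r` in the subgraph of `G` induced on
`{x : dist(r, x) ≤ 0}`. Then every edge of `F` has both endpoints in `K₀`, hence
`T ⊆ K₀` and `|K₀| > 1`. -/
theorem stmt_11 (G : SimpleGraph V) (T : Set V) (hG : IsGraft G T)
    (F : Set (Sym2 V)) (hF : IsMinJoin G T F) (hFc : ConnectedEdgeSet F)
    (r : V) (hr : Covers F r) (K₀ : Set V)
    (hK₀ : K₀ = {u | (sgRestrict G {x | distF G F r x ≤ 0}).Reachable r u}) :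
    (∀ e ∈ F, ∀ v ∈ e, v ∈ K₀) ∧ T ⊆ K₀ ∧ 1 < K₀.ncard := by
  have hFE : F ⊆ G.edgeSet := hF.1.1
  set S : Set V := {x | distF G F r x ≤ 0} with hS
  have hle : SimpleGraph.fromEdgeSet F ≤ sgRestrict G S := by
    intro a b hab
    rw [SimpleGraph.fromEdgeSet_adj] at hab
    refine ⟨(G.mem_edgeSet).1 (hFE hab.1), ?_, ?_⟩
    · exact distF_nonpos_of_reachable_in_F G F hFE r a
        (hFc.2 r a hr ⟨s(a, b), hab.1, Sym2.mem_mk_left a b⟩)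
    · exact distF_nonpos_of_reachable_in_F G F hFE r b
        (hFc.2 r b hr ⟨s(a, b), hab.1, Sym2.mem_mk_right a b⟩)
  have main : ∀ e ∈ F, ∀ v ∈ e, v ∈ K₀ := by
    intro e he v hv
    rw [hK₀]
    exact (hFc.2 r v hr ⟨e, he, hv⟩).mono hle
  refine ⟨main, ?_, ?_⟩
  · intro t ht
    have hodd : Odd {e ∈ F | t ∈ e}.ncard := (hF.1.2 t).2 ht
    have hne : {e ∈ F | t ∈ e}.Nonempty := by
      apply Set.nonempty_of_ncard_ne_zero
      intro h0
      rw [h0] at hodd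
      simp at hodd
    obtain ⟨e, he, hte⟩ := hne
    exact main e he t hte
  · obtain ⟨e, he⟩ := hFc.1
    have hee := hFE he
    induction e using Sym2.ind with
    | _ a b =>
      rw [SimpleGraph.mem_edgeSet] at hee
      rw [Set.one_lt_ncard K₀.toFinite]
      exact ⟨a, main _ he a (Sym2.mem_mk_left a b),
             b, main _ he b (Sym2.mem_mk_right a b), hee.ne⟩
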